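/- Let α > 0, r > 1 and n ∈ ℕ be such that α·r·(n+1)^r ≥ 3. Then ∫_{n+1}^∞ t·e^{−α t^r} dt ≤ (e^{−α (n+1)^r}/(α r (n+1)^{r−2}))·(1 + 2/(α r (n+1)^r − 2)). -/

import Mathlib

open MeasureTheory Real Filter

open Set Topology in
/-- For `α > 0`, `r > 1` and `n ∈ ℕ` with `α r (n+1)^r ≥ 3`,
`∫_{n+1}^∞ t e^{-α t^r} dt ≤ (e^{-α (n+1)^r}/(α r (n+1)^{r-2})) (1 + 2/(α r (n+1)^r - 2))`. -/
theorem integral_t_exp_bound (α r : ℝ) (hα : 0 < α) (hr : 1 < r) (n : ℕ)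
    (h : 3 ≤ α * r * ((n : ℝ) + 1) ^ r) :
    ∫ t in Set.Ioi ((n : ℝ) + 1), t * Real.exp (-α * t ^ r) ≤
      Real.exp (-α * ((n : ℝ) + 1) ^ r) / (α * r * ((n : ℝ) + 1) ^ (r - 2)) *
        (1 + 2 / (α * r * ((n : ℝ) + 1) ^ r - 2)) := by
  set a : ℝ := (n : ℝ) + 1 with ha_def
  have ha : (0:ℝ) < a := by positivity
  have hr0 : (0:ℝ) < r := by linarith
  set β : ℝ := α * r * a ^ (r - 1) with hβ_def
  have hβ : 0 < β := by positivity
  set K : ℝ := Real.exp (-α * a ^ r + β * a) with hK_def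
  -- pointwise bound
  have hpt : ∀ t ∈ Ioi a, t * Real.exp (-α * t ^ r) ≤ K * (t * Real.exp (-β * t)) := by
    intro t ht
    have hta : a < t := ht
    have ht0 : 0 < t := ha.trans hta
    have hbern : a ^ r + r * a ^ (r-1) * (t - a) ≤ t ^ r := by
      have hs : (-1:ℝ) ≤ t / a - 1 := by
        have : 0 ≤ t / a := by positivity
        linarith
      have := one_add_mul_self_le_rpow_one_add hs hr.le
      have heq : (1 + (t / a - 1)) = t / a := by ring
      rw [heq] at this
      have hmul := mul_le_mul_of_nonneg_left this (le_of_lt (rpow_pos_of_pos ha r))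
      calc a ^ r + r * a ^ (r-1) * (t - a)
          = a ^ r * (1 + r * (t / a - 1)) := by
            rw [Real.rpow_sub ha, Real.rpow_one]
            field_simp
        _ ≤ a ^ r * (t / a) ^ r := hmul
        _ = t ^ r := by
            rw [Real.div_rpow ht0.le ha.le]
            field_simp
    have hexp : Real.exp (-α * t ^ r) ≤ K * Real.exp (-β * t) := by
      rw [hK_def, ← Real.exp_add, Real.exp_le_exp]
      have : α * (a ^ r + r * a ^ (r-1) * (t-a)) ≤ α * t ^ r :=
        mul_le_mul_of_nonneg_left hbern hα.le
      rw [hβ_def]; nlinarith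
    calc t * Real.exp (-α * t ^ r) ≤ t * (K * Real.exp (-β * t)) :=
          mul_le_mul_of_nonneg_left hexp ht0.le
      _ = K * (t * Real.exp (-β * t)) := by ring
  -- integrability of RHS
  have hint : IntegrableOn (fun t : ℝ => t * Real.exp (-β * t)) (Ioi a) := by
    have h0 : IntegrableOn (fun t : ℝ => t ^ (1:ℝ) * Real.exp (-β * t ^ (1:ℝ))) (Ioi 0) :=
      integrableOn_rpow_mul_exp_neg_mul_rpow (by norm_num) one_pos hβ
    have h1 : IntegrableOn (fun t : ℝ => t * Real.exp (-β * t)) (Ioi 0) := by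
      refine h0.congr_fun (fun x hx => ?_) measurableSet_Ioi
      simp [Real.rpow_one]
    exact h1.mono_set (Ioi_subset_Ioi ha.le)
  have hintK : IntegrableOn (fun t : ℝ => K * (t * Real.exp (-β * t))) (Ioi a) :=
    hint.const_mul K
  -- integrability of LHS
  have hintL : IntegrableOn (fun t : ℝ => t * Real.exp (-α * t ^ r)) (Ioi a) := by
    have h0 : IntegrableOn (fun t : ℝ => t ^ (1:ℝ) * Real.exp (-α * t ^ r)) (Ioi 0) :=
      integrableOn_rpow_mul_exp_neg_mul_rpow (by norm_num) hr0 hα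
    have h1 : IntegrableOn (fun t : ℝ => t * Real.exp (-α * t ^ r)) (Ioi 0) := by
      refine h0.congr_fun (fun x hx => ?_) measurableSet_Ioi
      simp [Real.rpow_one]
    exact h1.mono_set (Ioi_subset_Ioi ha.le)
  have hmono : ∫ t in Ioi a, t * Real.exp (-α * t ^ r)
      ≤ ∫ t in Ioi a, K * (t * Real.exp (-β * t)) :=
    setIntegral_mono_on hintL hintK measurableSet_Ioi hpt
  -- compute RHS integral via FTC
  have hFTC : ∫ t in Ioi a, t * Real.exp (-β * t)
      = (a / β + 1 / β ^ 2) * Real.exp (-β * a) := by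
    have hderiv : ∀ x ∈ Ici a, HasDerivAt (fun t => -((t / β + 1 / β ^ 2) * Real.exp (-β * t)))
        (x * Real.exp (-β * x)) x := by
      intro x _
      have h1 : HasDerivAt (fun t : ℝ => t / β + 1 / β ^ 2) (1 / β) x := by
        have := ((hasDerivAt_id x).div_const β).add_const (1 / β ^ 2)
        simpa [one_div] using this
      have h2 : HasDerivAt (fun t : ℝ => Real.exp (-β * t)) (-β * Real.exp (-β * x)) x := by
        have := ((hasDerivAt_id x).const_mul (-β)).exp
        simpa [mul_comm] using this
      have : HasDerivAt (fun t => -((t / β + 1 / β ^ 2) * Real.exp (-β * t))) _ x := (h1.mul h2).neg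
      convert this using 1
      field_simp
      ring
    have htend : Tendsto (fun t => -((t / β + 1 / β ^ 2) * Real.exp (-β * t))) atTop (𝓝 0) := by
      have h1 : Tendsto (fun t : ℝ => t ^ (1:ℝ) * Real.exp (-β * t)) atTop (𝓝 0) :=
        tendsto_rpow_mul_exp_neg_mul_atTop_nhds_zero 1 β hβ
      have h1' : Tendsto (fun t : ℝ => t * Real.exp (-β * t)) atTop (𝓝 0) := by
        apply h1.congr'
        filter_upwards [eventually_gt_atTop 0] with x hx
        rw [Real.rpow_one]
      have h2 : Tendsto (fun t : ℝ => Real.exp (-β * t)) atTop (𝓝 0) :=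
        Real.tendsto_exp_atBot.comp (tendsto_id.const_mul_atTop_of_neg (by linarith))
      have : Tendsto (fun t : ℝ => -((1/β) * (t * Real.exp (-β * t)) + (1/β^2) * Real.exp (-β * t))) atTop (𝓝 (-((1/β) * 0 + (1/β^2) * 0))) :=
        (((h1'.const_mul (1/β)).add (h2.const_mul (1/β^2))).neg)
      have heq : ∀ x : ℝ, -((1/β) * (x * Real.exp (-β * x)) + (1/β^2) * Real.exp (-β * x)) = -((x / β + 1 / β ^ 2) * Real.exp (-β * x)) := fun x => by ring
      simpa using this.congr heq
    have := integral_Ioi_of_hasDerivAt_of_tendsto' hderiv hint htend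
    rw [this]
    ring
  -- final algebra
  have hfin : K * ((a / β + 1 / β ^ 2) * Real.exp (-β * a))
      ≤ Real.exp (-α * a ^ r) / (α * r * a ^ (r - 2)) * (1 + 2 / (α * r * a ^ r - 2)) := by
    have hKe : K * Real.exp (-β * a) = Real.exp (-α * a ^ r) := by
      rw [hK_def, ← Real.exp_add]; ring_nf
    have heq : a / β + 1 / β ^ 2 = 1 / (α * r * a ^ (r-2)) * (1 + 1 / (α * r * a ^ r)) := by
      have h1 : a ^ (r-1) = a ^ r / a := by rw [Real.rpow_sub ha, Real.rpow_one]
      have h2 : a ^ (r-2) = a ^ r / a ^ (2:ℕ) := by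
        rw [Real.rpow_sub ha, Real.rpow_two]
      have hA : 0 < a ^ r := rpow_pos_of_pos ha r
      rw [hβ_def, h1, h2]
      field_simp
    have hx : (3:ℝ) ≤ α * r * a ^ r := h
    have hcmp : 1 + 1 / (α * r * a ^ r) ≤ 1 + 2 / (α * r * a ^ r - 2) := by
      have h1 : (0:ℝ) < α * r * a ^ r - 2 := by linarith
      have h2 : (0:ℝ) < α * r * a ^ r := by linarith
      have : 1 / (α * r * a ^ r) ≤ 2 / (α * r * a ^ r - 2) := by
        rw [div_le_div_iff₀ h2 h1]; nlinarith
      linarith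
    have hpre : 0 < α * r * a ^ (r-2) := by positivity
    calc K * ((a / β + 1 / β ^ 2) * Real.exp (-β * a))
        = (K * Real.exp (-β * a)) * (a / β + 1 / β ^ 2) := by ring
      _ = Real.exp (-α * a ^ r) / (α * r * a ^ (r-2)) * (1 + 1 / (α * r * a ^ r)) := by
          rw [hKe, heq]; ring
      _ ≤ Real.exp (-α * a ^ r) / (α * r * a ^ (r-2)) * (1 + 2 / (α * r * a ^ r - 2)) := by
          apply mul_le_mul_of_nonneg_left hcmp
          positivity
  calc ∫ t in Ioi a, t * Real.exp (-α * t ^ r)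
      ≤ ∫ t in Ioi a, K * (t * Real.exp (-β * t)) := hmono
    _ = K * ∫ t in Ioi a, t * Real.exp (-β * t) := by rw [integral_const_mul]
    _ = K * ((a / β + 1 / β ^ 2) * Real.exp (-β * a)) := by rw [hFTC]
    _ ≤ _ := hfin
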